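/- arXiv:1002.0982 — 2 statements merged into one kernel-verified Lean document; each statement's English description precedes it below -/
import Mathlib

section
/- Let Q be a quantale and p ∈ Q^{X×Y} a strong coder, i.e., there is an injective map ε : Y → X with p(ε(y), y) = e for all y and p(ε(y₁), y₂) = ⊥ whenever y₁ ≠ y₂. Then H_p ∘ Λ_p = id_{Q^Y}; consequently H_p is surjective and Λ_p is injective. -/
lemma strong_aux {Q : Type*} [Monoid Q] [CompleteLattice Q] [IsQuantale Q]
    (s : Set Q) (a b : Q) (h : ∀ c ∈ s, c * a ≤ b) : sSup s * a ≤ b := by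
  rw [IsQuantale.sSup_mul_distrib]
  exact iSup₂_le h

/-- If `p` is a strong coder (there is an injective `ε : Y → X` with
`p (ε y, y) = e` and `p (ε y₁, y₂) = ⊥` for `y₁ ≠ y₂`), then `H_p ∘ Λ_p = id`,
so `H_p` is surjective and `Λ_p` is injective. -/
theorem strong_transform_section {Q X Y : Type*} [Monoid Q] [CompleteLattice Q]
    [IsQuantale Q] [Nonempty X] [Nonempty Y] (p : X × Y → Q)
    (ε : Y → X) (hε : Function.Injective ε)
    (hnorm : ∀ y : Y, p (ε y, y) = 1)
    (hstrong : ∀ y₁ y₂ : Y, y₁ ≠ y₂ → p (ε y₁, y₂) = ⊥) :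
    (∀ g : Y → Q,
      (fun y => ⨆ x, (fun x => ⨅ y', sSup {c : Q | c * p (x, y') ≤ g y'}) x * p (x, y)) = g) ∧
    Function.Surjective (fun (f : X → Q) => fun y => ⨆ x, f x * p (x, y)) ∧
    Function.Injective
      (fun (g : Y → Q) => fun x => ⨅ y, sSup {c : Q | c * p (x, y) ≤ g y}) := by
  have bot_mul : ∀ a : Q, (⊥ : Q) * a = ⊥ := by
    intro a
    have : sSup (∅ : Set Q) * a = ⨆ x ∈ (∅ : Set Q), x * a := IsQuantale.sSup_mul_distrib _ _
    simpa using this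
  have key : ∀ g : Y → Q,
      (fun y => ⨆ x, (fun x => ⨅ y', sSup {c : Q | c * p (x, y') ≤ g y'}) x * p (x, y)) = g := by
    intro g
    funext y
    apply le_antisymm
    · apply iSup_le
      intro x
      calc (⨅ y', sSup {c : Q | c * p (x, y') ≤ g y'}) * p (x, y)
          ≤ sSup {c : Q | c * p (x, y) ≤ g y} * p (x, y) :=
            mul_le_mul_left (iInf_le _ y) _
        _ ≤ g y := strong_aux _ _ _ (fun c hc => hc)
    · have h1 : g y ≤ ⨅ y', sSup {c : Q | c * p (ε y, y') ≤ g y'} := by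
        apply le_iInf
        intro y'
        apply le_sSup
        by_cases h : y = y'
        · subst h; simp [hnorm y]
        · have : g y * p (ε y, y') = ⊥ := by
            rw [hstrong y y' h]
            have h2 : g y * sSup (∅ : Set Q) = ⨆ x ∈ (∅ : Set Q), g y * x :=
              IsQuantale.mul_sSup_distrib _ _
            simpa using h2
          simp [this]
      calc g y = g y * p (ε y, y) := by rw [hnorm y, mul_one]
        _ ≤ (⨅ y', sSup {c : Q | c * p (ε y, y') ≤ g y'}) * p (ε y, y) :=
            mul_le_mul_left h1 _
        _ ≤ ⨆ x, (⨅ y', sSup {c : Q | c * p (x, y') ≤ g y'}) * p (x, y) :=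
            le_iSup (fun x => (⨅ y', sSup {c : Q | c * p (x, y') ≤ g y'}) * p (x, y)) (ε y)
  refine ⟨key, ?_, ?_⟩
  · intro g
    exact ⟨fun x => ⨅ y', sSup {c : Q | c * p (x, y') ≤ g y'}, key g⟩
  · intro g₁ g₂ h
    have := congrArg (fun f : X → Q => fun y => ⨆ x, f x * p (x, y)) h
    simpa [key g₁, key g₂] using this
end

section
/- For a quantale Q and nonempty sets X, Y, the map p ↦ H_p is an isomorphism of complete lattices between Q^{X×Y} (pointwise order) and Hom_Q(Q^X, Q^Y) (pointwise order); if Q is commutative it is an isomorphism of Q-modules. In particular End_Q(Q^X) ≅ Q^{X×X}. -/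
section Aux

variable {Q : Type*} [Monoid Q] [CompleteLattice Q] [IsQuantale Q]

lemma qbot_mul (a : Q) : (⊥ : Q) * a = ⊥ := by
  simpa using sSup_mul_distrib (s := (∅ : Set Q)) (x := a)

lemma qmul_bot (a : Q) : a * (⊥ : Q) = ⊥ := by
  simpa using mul_sSup_distrib (x := a) (s := (∅ : Set Q))

variable {X : Type*}

/-- The "Dirac" basis element at `x`. -/
noncomputable def qdelta (x : X) : X → Q := fun x' => by
  classical exact if x' = x then 1 else ⊥

lemma qdelta_mul (x : X) (g : X → Q) : (⨆ x', qdelta x x' * g x') = g x := by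
  classical
  apply le_antisymm
  · apply iSup_le; intro x'
    by_cases h : x' = x
    · subst h; simp [qdelta]
    · simp [qdelta, h, qbot_mul]
  · refine le_trans ?_ (le_iSup _ x); simp [qdelta]

lemma mul_qdelta (f : X → Q) (x' : X) : (⨆ x, f x * qdelta x x') = f x' := by
  classical
  apply le_antisymm
  · apply iSup_le; intro x
    by_cases h : x' = x
    · subst h; simp [qdelta]
    · simp [qdelta, h, qmul_bot]
  · refine le_trans ?_ (le_iSup _ x'); simp [qdelta]

end Aux

/-- Homomorphisms between the free `Q`-modules `Q^X` and `Q^Y` (pointwise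
structure): maps preserving arbitrary joins and the scalar action. -/
def IsFreeQModuleHom {Q X Y : Type*} [Monoid Q] [CompleteLattice Q] [IsQuantale Q]
    (h : (X → Q) → (Y → Q)) : Prop :=
  (∀ F : Set (X → Q), h (sSup F) = ⨆ f ∈ F, h f) ∧
  (∀ (q : Q) (f : X → Q), h (fun x => q * f x) = fun y => q * h f y)

/-- The map `p ↦ H_p` is an isomorphism of complete lattices between `Q^{X×Y}`
and `Hom_Q(Q^X, Q^Y)` (both ordered pointwise): it is an order embedding whose
range is exactly the set of `Q`-module homomorphisms; when `Q` is commutative it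
also preserves the scalar action, hence is an isomorphism of `Q`-modules.
(The case `Y = X` gives `End_Q(Q^X) ≅ Q^{X×X}`.) -/
theorem kernel_hom_isomorphism {Q X Y : Type*} [Monoid Q] [CompleteLattice Q]
    [IsQuantale Q] [Nonempty X] [Nonempty Y] :
    -- every transform is a homomorphism
    (∀ p : X × Y → Q,
      IsFreeQModuleHom (fun (f : X → Q) => fun y => ⨆ x, f x * p (x, y))) ∧
    -- every homomorphism is the transform of a unique kernel
    (∀ h : (X → Q) → (Y → Q), IsFreeQModuleHom h →
      ∃! p : X × Y → Q, h = fun f => fun y => ⨆ x, f x * p (x, y)) ∧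
    -- `p ↦ H_p` is an order isomorphism onto its image
    (∀ p p' : X × Y → Q, p ≤ p' ↔
      ∀ f : X → Q, (fun y => ⨆ x, f x * p (x, y)) ≤ fun y => ⨆ x, f x * p' (x, y)) ∧
    -- when `Q` is commutative, `p ↦ H_p` preserves the scalar action
    ((∀ a b : Q, a * b = b * a) → ∀ (q : Q) (p : X × Y → Q),
      (fun (f : X → Q) => fun y => ⨆ x, f x * (q * p (x, y))) =
        fun (f : X → Q) => fun y => q * ⨆ x, f x * p (x, y)) := by
  refine ⟨?_, ?_, ?_, ?_⟩
  · -- transforms are homomorphisms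
    intro p
    constructor
    · intro F
      funext y
      have h1 : sSup F = ⨆ f : F, (f : X → Q) := sSup_eq_iSup' _
      calc (⨆ x, (sSup F) x * p (x, y))
          = ⨆ x, ⨆ f : F, (f : X → Q) x * p (x, y) := by
            simp [h1, iSup_apply, Quantale.iSup_mul_distrib]
        _ = ⨆ f : F, ⨆ x, (f : X → Q) x * p (x, y) := iSup_comm
        _ = (⨆ f ∈ F, fun y => ⨆ x, f x * p (x, y)) y := by
            rw [← iSup_subtype'']; simp [iSup_apply]
    · intro q f
      funext y
      simp [mul_assoc, Quantale.mul_iSup_distrib]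
  · -- existence and uniqueness of kernel
    intro h ⟨hjoin, hsmul⟩
    refine ⟨fun z => h (qdelta z.1) z.2, ?_, ?_⟩
    · funext f
      have hf : f = sSup (Set.range fun x => fun x' => f x * qdelta x x') := by
        funext x'
        rw [sSup_range, iSup_apply]
        exact (mul_qdelta f x').symm
      calc h f = h (sSup (Set.range fun x => fun x' => f x * qdelta x x')) := by rw [← hf]
        _ = ⨆ g ∈ (Set.range fun x => fun x' => f x * qdelta x x'), h g := hjoin _
        _ = ⨆ x, h (fun x' => f x * qdelta x x') := by rw [iSup_range]
        _ = ⨆ x, fun y => f x * h (qdelta x) y := by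
            congr 1; funext x; exact hsmul (f x) (qdelta x)
        _ = fun y => ⨆ x, f x * h (qdelta x) y := by
            funext y; simp [iSup_apply]
    · intro p' hp'
      funext z
      have : h (qdelta z.1) z.2 = ⨆ x', qdelta z.1 x' * p' (x', z.2) := by
        rw [hp']
      rw [this, qdelta_mul z.1 (fun x' => p' (x', z.2))]
  · -- order embedding
    intro p p'
    constructor
    · intro hle f y
      exact iSup_mono fun x => mul_le_mul_right (hle (x, y)) _
    · intro H z
      have := H (qdelta z.1) z.2
      simpa [qdelta_mul z.1 (fun x => p (x, z.2)),
        qdelta_mul z.1 (fun x => p' (x, z.2))] using this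
  · -- commutative case
    intro comm q p
    funext f y
    calc (⨆ x, f x * (q * p (x, y)))
        = ⨆ x, q * (f x * p (x, y)) := by
          congr 1; funext x; rw [← mul_assoc, comm (f x) q, mul_assoc]
      _ = q * ⨆ x, f x * p (x, y) := (Quantale.mul_iSup_distrib).symm
end
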